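/- (Theorem 2, unlabeled W₁ bound) Let P, Q, Q↑, Q↓ be probability measures on ℝ with finite first moments, with Q↑ ≽ Q ≽ Q↓, and suppose P has bounded density p. Then the total coverage gap satisfies Δ_{P,Q} ≤ (1/2)(sup_t p(t))·(W₁(P, Q↑) + W₁(P, Q↓) + E_{Q↑}[X] − E_{Q↓}[X]). -/

import Mathlib

open MeasureTheory Set
open scoped Classical

/-- CDF of a measure on ℝ. -/
noncomputable def F (μ : Measure ℝ) (t : ℝ) : ℝ := (μ (Iic t)).toReal

/-- 1-Wasserstein distance: infimum over couplings of `P` and `Q` of the expected distance. -/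
noncomputable def W1 (P Q : Measure ℝ) : ℝ :=
  ⨅ π : {π : Measure (ℝ × ℝ) // π.map Prod.fst = P ∧ π.map Prod.snd = Q},
    ∫ p, |p.1 - p.2| ∂(π : Measure (ℝ × ℝ))

/-- Empirical `(1−α)`-quantile of a sample `s` of size `n`. -/
noncomputable def empQuantile {n : ℕ} (s : Fin n → ℝ) (α : ℝ) : ℝ :=
  sInf {t : ℝ | 1 - α ≤ ((Finset.univ.filter fun i => s i ≤ t).card : ℝ) / (n : ℝ)}

/-- Total coverage gap `Δ_{P,Q}` for a calibration sample of size `n`. -/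
noncomputable def totalCovGap (P Q : Measure ℝ) (n : ℕ) : ℝ :=
  ∫ α in (0:ℝ)..1,
    |∫ s, (F P (empQuantile s α) - F Q (empQuantile s α))
        ∂(Measure.pi fun _ : Fin n => P)|

open scoped ENNReal

namespace Stmt8Aux

noncomputable def cnt {n : ℕ} (s : Fin n → ℝ) (c : ℝ) : ℕ :=
  (Finset.univ.filter fun i => s i ≤ c).card

lemma cnt_mono {n : ℕ} (s : Fin n → ℝ) {c d : ℝ} (h : c ≤ d) : cnt s c ≤ cnt s d := by
  apply Finset.card_le_card
  intro i hi
  simp only [Finset.mem_filter, Finset.mem_univ, true_and] at *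
  exact hi.trans h

lemma cnt_le {n : ℕ} (s : Fin n → ℝ) (c : ℝ) : cnt s c ≤ n := by
  simpa [cnt] using Finset.card_filter_le (Finset.univ : Finset (Fin n)) _

lemma measurable_cnt {n : ℕ} (c : ℝ) :
    Measurable (fun s : Fin n → ℝ => (cnt s c : ℝ)) := by
  have : (fun s : Fin n → ℝ => (cnt s c : ℝ))
      = fun s => ∑ i : Fin n, if s i ≤ c then (1:ℝ) else 0 := by
    funext s
    rw [cnt, Finset.card_filter]
    push_cast
    rfl
  rw [this]
  exact Finset.measurable_sum _ fun i _ =>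
    Measurable.ite (measurableSet_le (measurable_pi_apply i) measurable_const)
      measurable_const measurable_const

lemma empQuantile_le_iff {n : ℕ} (hn : 0 < n) {α : ℝ} (hα : α ∈ Ioo (0:ℝ) 1)
    (s : Fin n → ℝ) (c : ℝ) :
    empQuantile s α ≤ c ↔ 1 - α ≤ (cnt s c : ℝ) / n := by
  have hnR : (0:ℝ) < n := by exact_mod_cast hn
  set S : Set ℝ := {t : ℝ | 1 - α ≤ ((Finset.univ.filter fun i => s i ≤ t).card : ℝ) / (n : ℝ)}
    with hS
  have hmem : ∀ t, t ∈ S ↔ 1 - α ≤ (cnt s t : ℝ) / n := fun t => Iff.rfl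
  have hup : ∀ {t t' : ℝ}, t ≤ t' → t ∈ S → t' ∈ S := by
    intro t t' htt' ht
    rw [hmem] at *
    refine ht.trans ?_
    gcongr
    exact_mod_cast cnt_mono s htt'
  have hne : Nonempty (Fin n) := Fin.pos_iff_nonempty.mp hn
  have huniv : (Finset.univ : Finset (Fin n)).Nonempty := Finset.univ_nonempty
  -- S is nonempty
  set M := Finset.univ.sup' huniv s with hM
  have hMmem : M ∈ S := by
    rw [hmem]
    have : cnt s M = n := by
      rw [cnt]
      have : (Finset.univ.filter fun i => s i ≤ M) = Finset.univ := by
        apply Finset.filter_true_of_mem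
        intro i _
        exact Finset.le_sup' s (Finset.mem_univ i)
      rw [this, Finset.card_univ, Fintype.card_fin]
    rw [this, div_self hnR.ne']
    linarith [hα.1]
  have hSne : S.Nonempty := ⟨M, hMmem⟩
  -- S is bounded below
  set m0 := Finset.univ.inf' huniv s with hm0
  have hbdd : BddBelow S := by
    refine ⟨m0, fun t ht => ?_⟩
    by_contra hlt
    push_neg at hlt
    have : cnt s t = 0 := by
      rw [cnt, Finset.card_eq_zero]
      apply Finset.filter_eq_empty_iff.mpr
      intro i _
      push_neg
      exact lt_of_lt_of_le hlt (Finset.inf'_le s (Finset.mem_univ i))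
    rw [hmem, this] at ht
    simp only [Nat.cast_zero, zero_div] at ht
    linarith [hα.2]
  constructor
  · intro h
    -- sInf S ∈ S
    have hinf : sInf S ∈ S := by
      set B := Finset.univ.filter fun i => sInf S < s i with hB
      by_cases hBne : B.Nonempty
      · set μ := B.inf' hBne s with hμ
        have hμgt : sInf S < μ := by
          rw [hμ, Finset.lt_inf'_iff]
          intro i hi
          exact (Finset.mem_filter.mp hi).2
        obtain ⟨t, htS, htμ⟩ := exists_lt_of_csInf_lt hSne hμgt
        have hmt : sInf S ≤ t := csInf_le hbdd htS
        have hsub : (Finset.univ.filter fun i => s i ≤ t)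
            ⊆ Finset.univ.filter fun i => s i ≤ sInf S := by
          intro i hi
          simp only [Finset.mem_filter, Finset.mem_univ, true_and] at *
          by_contra hgt
          push_neg at hgt
          have hiB : i ∈ B := Finset.mem_filter.mpr ⟨Finset.mem_univ i, hgt⟩
          have : μ ≤ s i := Finset.inf'_le s hiB
          linarith
        rw [hmem]
        have h1 : (1:ℝ) - α ≤ (cnt s t : ℝ) / n := (hmem t).mp htS
        refine h1.trans ?_
        gcongr
        exact_mod_cast Finset.card_le_card hsub
      · rw [hmem]
        have : cnt s (sInf S) = n := by
          rw [cnt]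
          have : (Finset.univ.filter fun i => s i ≤ sInf S) = Finset.univ := by
            apply Finset.filter_true_of_mem
            intro i _
            by_contra hgt
            push_neg at hgt
            exact hBne ⟨i, Finset.mem_filter.mpr ⟨Finset.mem_univ i, hgt⟩⟩
          rw [this, Finset.card_univ, Fintype.card_fin]
        rw [this, div_self hnR.ne']
        linarith [hα.1]
    exact (hmem c).mp (hup h hinf)
  · intro h
    exact csInf_le hbdd ((hmem c).mpr h)

noncomputable def T2 {n : ℕ} : ℝ × (Fin n → ℝ) → ℝ :=
  fun q => if q.1 ∈ Ioo (0:ℝ) 1 then empQuantile q.2 q.1 else 0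

lemma measurable_T2 {n : ℕ} (hn : 0 < n) : Measurable (T2 (n := n)) := by
  apply measurable_of_Iic
  intro c
  have hset : T2 (n := n) ⁻¹' Iic c =
      ((Ioo (0:ℝ) 1 ×ˢ (univ : Set (Fin n → ℝ))) ∩
        {q : ℝ × (Fin n → ℝ) | 1 - q.1 ≤ (cnt q.2 c : ℝ) / n}) ∪
      ((if (0:ℝ) ≤ c then ((Ioo (0:ℝ) 1)ᶜ ×ˢ (univ : Set (Fin n → ℝ))) else ∅)) := by
    ext ⟨α, s⟩
    by_cases hα : α ∈ Ioo (0:ℝ) 1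
    · have hT : T2 (n := n) (α, s) = empQuantile s α := if_pos hα
      simp only [mem_preimage, mem_Iic, hT, mem_union, mem_inter_iff, mem_prod,
        mem_univ, and_true, mem_setOf_eq, hα, true_and]
      rw [empQuantile_le_iff hn hα s c]
      constructor
      · exact Or.inl
      · rintro (h | h)
        · exact h
        · split at h
          · exact absurd hα (mem_prod.mp h).1
          · exact absurd h (notMem_empty _)
    · have hT : T2 (n := n) (α, s) = 0 := if_neg hα
      simp only [mem_preimage, mem_Iic, hT, mem_union, mem_inter_iff, mem_prod,
        mem_univ, and_true, mem_setOf_eq, hα, false_and, false_or]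
      by_cases h0 : (0:ℝ) ≤ c
      · simp [h0, hα]
      · simp [h0]
  rw [hset]
  apply MeasurableSet.union
  · exact (measurableSet_Ioo.prod MeasurableSet.univ).inter
      (measurableSet_le (measurable_const.sub measurable_fst)
        (((measurable_cnt c).comp measurable_snd).div_const _))
  · split
    · exact (measurableSet_Ioo.compl.prod MeasurableSet.univ)
    · exact MeasurableSet.empty

lemma measurable_T2_right {n : ℕ} (hn : 0 < n) (α : ℝ) :
    Measurable (fun s : Fin n → ℝ => T2 (α, s)) :=
  (measurable_T2 hn).comp (measurable_prodMk_left)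

lemma measurable_T2_left {n : ℕ} (hn : 0 < n) (s : Fin n → ℝ) :
    Measurable (fun α : ℝ => T2 (α, s)) :=
  (measurable_T2 hn).comp (measurable_prodMk_right)

/-- pushforward of uniform on (0,1) under the quantile map is the empirical measure -/
lemma map_T2 {n : ℕ} (hn : 0 < n) (s : Fin n → ℝ) :
    Measure.map (fun α => T2 (α, s)) (volume.restrict (Ioo (0:ℝ) 1))
      = (n : ℝ≥0∞)⁻¹ • ∑ i : Fin n, Measure.dirac (s i) := by
  have hnR : (0:ℝ) < n := by exact_mod_cast hn
  have hfin : IsFiniteMeasure (Measure.map (fun α => T2 (α, s)) (volume.restrict (Ioo (0:ℝ) 1))) := by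
    constructor
    rw [Measure.map_apply (measurable_T2_left hn s) MeasurableSet.univ]
    simp [Real.volume_Ioo]
  refine @Measure.ext_of_Iic ℝ _ _ _ _ _ _ _ _ hfin ?_
  intro c
  rw [Measure.map_apply (measurable_T2_left hn s) measurableSet_Iic,
    Measure.restrict_apply ((measurable_T2_left hn s) measurableSet_Iic)]
  have hr0 : (0:ℝ) ≤ (cnt s c : ℝ) / n := by positivity
  have hr1 : (cnt s c : ℝ) / n ≤ 1 := by
    rw [div_le_one hnR]
    exact_mod_cast cnt_le s c
  have hseteq : (fun α => T2 (α, s)) ⁻¹' Iic c ∩ Ioo 0 1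
      = Ici (1 - (cnt s c : ℝ)/n) ∩ Ioo 0 1 := by
    ext α
    simp only [mem_inter_iff, mem_preimage, mem_Iic, mem_Ici, and_congr_left_iff]
    intro hα
    rw [T2, if_pos hα, empQuantile_le_iff hn hα]
    constructor <;> intro h <;> linarith
  rw [hseteq]
  have hRHS : ((n : ℝ≥0∞)⁻¹ • ∑ i : Fin n, Measure.dirac (s i)) (Iic c)
      = ENNReal.ofReal ((cnt s c : ℝ) / n) := by
    rw [Measure.smul_apply, Measure.finset_sum_apply]
    have : ∀ i : Fin n, Measure.dirac (s i) (Iic c) = if s i ≤ c then (1:ℝ≥0∞) else 0 := by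
      intro i
      rw [Measure.dirac_apply' _ measurableSet_Iic]
      simp [indicator_apply]
    simp only [this, Finset.sum_boole]
    rw [ENNReal.ofReal_div_of_pos hnR, ENNReal.ofReal_natCast, ENNReal.ofReal_natCast,
      smul_eq_mul, div_eq_mul_inv, mul_comm]
    rw [cnt]
  rw [hRHS]
  rcases lt_or_eq_of_le hr1 with hlt | heq
  · have h1r : (0:ℝ) < 1 - (cnt s c : ℝ)/n := by linarith
    have : Ici (1 - (cnt s c : ℝ)/n) ∩ Ioo (0:ℝ) 1 = Ico (1 - (cnt s c : ℝ)/n) 1 := by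
      ext α
      simp only [mem_inter_iff, mem_Ici, mem_Ioo, mem_Ico]
      constructor
      · rintro ⟨h1, _, h3⟩; exact ⟨h1, h3⟩
      · rintro ⟨h1, h2⟩; exact ⟨h1, by linarith, h2⟩
    rw [this, Real.volume_Ico]
    congr 1
    ring
  · have : Ici (1 - (cnt s c : ℝ)/n) ∩ Ioo (0:ℝ) 1 = Ioo (0:ℝ) 1 := by
      rw [← heq]
      simp only [sub_self]
      ext α
      simp only [mem_inter_iff, mem_Ici, mem_Ioo]
      exact ⟨fun h => h.2, fun h => ⟨h.1.le, h⟩⟩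
    rw [this, Real.volume_Ioo, ← heq]
    norm_num

lemma integral_T2 {n : ℕ} (hn : 0 < n) (s : Fin n → ℝ) {f : ℝ → ℝ} (hf : Measurable f) :
    ∫ α in Ioo (0:ℝ) 1, f (T2 (α, s)) = (n:ℝ)⁻¹ * ∑ i : Fin n, f (s i) := by
  have h1 : ∫ α in Ioo (0:ℝ) 1, f (T2 (α, s))
      = ∫ t, f t ∂(Measure.map (fun α => T2 (α, s)) (volume.restrict (Ioo (0:ℝ) 1))) := by
    rw [integral_map (measurable_T2_left hn s).aemeasurable hf.aestronglyMeasurable]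
  rw [h1, map_T2 hn s, integral_smul_measure, integral_finset_sum_measure]
  · simp only [integral_dirac]
    rw [ENNReal.toReal_inv, smul_eq_mul]
    norm_num
  · intro i _
    refine ⟨hf.aestronglyMeasurable, ?_⟩
    rw [HasFiniteIntegral]
    rw [lintegral_dirac' _ hf.enorm]
    exact enorm_lt_top

/-- marginal of i-th coordinate of a product measure -/
lemma map_eval_pi {n : ℕ} (P : Measure ℝ) [IsProbabilityMeasure P] (i : Fin n) :
    Measure.map (fun s : Fin n → ℝ => s i) (Measure.pi fun _ => P) = P := by
  apply Measure.ext
  intro t ht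
  rw [Measure.map_apply (measurable_pi_apply i) ht]
  have : (fun s : Fin n → ℝ => s i) ⁻¹' t
      = Set.pi univ (Function.update (fun _ : Fin n => (univ : Set ℝ)) i t) := by
    rw [Set.eval_preimage]
  rw [this, Measure.pi_pi]
  rw [Finset.prod_eq_single i]
  · simp
  · intro j _ hj
    simp [Function.update_of_ne hj]
  · simp

lemma integral_eval_pi {n : ℕ} (P : Measure ℝ) [IsProbabilityMeasure P] (i : Fin n)
    {f : ℝ → ℝ} (hf : Measurable f) :
    ∫ s, f (s i) ∂(Measure.pi fun _ : Fin n => P) = ∫ t, f t ∂P := by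
  rw [← map_eval_pi P i, integral_map (measurable_pi_apply i).aemeasurable]
  rw [map_eval_pi P i]
  exact hf.aestronglyMeasurable

lemma F_nonneg (μ : Measure ℝ) (t : ℝ) : 0 ≤ F μ t := ENNReal.toReal_nonneg

lemma F_le_one (μ : Measure ℝ) [IsProbabilityMeasure μ] (t : ℝ) : F μ t ≤ 1 := by
  rw [F]
  have h := prob_le_one (μ := μ) (s := Iic t)
  calc (μ (Iic t)).toReal ≤ (1 : ℝ≥0∞).toReal :=
        ENNReal.toReal_mono ENNReal.one_ne_top h
    _ = 1 := ENNReal.toReal_one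

lemma measurable_F (μ : Measure ℝ) [IsFiniteMeasure μ] : Measurable (F μ) := by
  have : Monotone (F μ) := by
    intro a b hab
    exact ENNReal.toReal_mono (measure_ne_top μ _) (measure_mono (Iic_subset_Iic.mpr hab))
  exact this.measurable

/-- pointwise: |1_{x≤t} - 1_{y≤t}| as ENNReal equals indicator of [min,max) -/
lemma ind_diff_eq (x y t : ℝ) :
    ENNReal.ofReal |(if x ≤ t then (1:ℝ) else 0) - (if y ≤ t then (1:ℝ) else 0)|
      = (Ico (min x y) (max x y)).indicator (fun _ => (1:ℝ≥0∞)) t := by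
  by_cases hx : x ≤ t <;> by_cases hy : y ≤ t
  · have hne : t ∉ Ico (min x y) (max x y) := fun h => absurd h.2 (not_lt.mpr (max_le hx hy))
    simp [hx, hy, indicator_of_notMem hne]
  · have hmem : t ∈ Ico (min x y) (max x y) :=
      ⟨(min_le_left x y).trans hx, lt_of_lt_of_le (not_le.mp hy) (le_max_right x y)⟩
    simp [hx, hy, indicator_of_mem hmem]
  · have hmem : t ∈ Ico (min x y) (max x y) :=
      ⟨(min_le_right x y).trans hy, lt_of_lt_of_le (not_le.mp hx) (le_max_left x y)⟩
    simp [hx, hy, indicator_of_mem hmem]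
  · have hne : t ∉ Ico (min x y) (max x y) := fun h =>
      absurd h.1 (not_le.mpr (lt_min (not_le.mp hx) (not_le.mp hy)))
    simp [hx, hy, indicator_of_notMem hne]

lemma lintegral_ind_diff (x y : ℝ) :
    ∫⁻ t, ENNReal.ofReal |(if x ≤ t then (1:ℝ) else 0) - (if y ≤ t then (1:ℝ) else 0)|
      = ENNReal.ofReal |x - y| := by
  simp only [ind_diff_eq]
  rw [lintegral_indicator_const measurableSet_Ico, one_mul, Real.volume_Ico]
  rw [max_sub_min_eq_abs']

/-- integral of the indicator difference over a coupling gives the CDF difference -/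
lemma integral_ind_diff (π : Measure (ℝ × ℝ)) [IsProbabilityMeasure π]
    {A B : Measure ℝ} (h1 : π.map Prod.fst = A) (h2 : π.map Prod.snd = B) (t : ℝ) :
    ∫ q : ℝ × ℝ, ((if q.1 ≤ t then (1:ℝ) else 0) - (if q.2 ≤ t then (1:ℝ) else 0)) ∂π
      = F A t - F B t := by
  have e1 : ∀ q : ℝ × ℝ, (if q.1 ≤ t then (1:ℝ) else 0)
      = (Prod.fst ⁻¹' Iic t).indicator (fun _ => (1:ℝ)) q := by
    intro q; simp [indicator_apply, mem_preimage, mem_Iic]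
  have e2 : ∀ q : ℝ × ℝ, (if q.2 ≤ t then (1:ℝ) else 0)
      = (Prod.snd ⁻¹' Iic t).indicator (fun _ => (1:ℝ)) q := by
    intro q; simp [indicator_apply, mem_preimage, mem_Iic]
  have m1 : MeasurableSet (Prod.fst ⁻¹' Iic t : Set (ℝ × ℝ)) :=
    measurable_fst measurableSet_Iic
  have m2 : MeasurableSet (Prod.snd ⁻¹' Iic t : Set (ℝ × ℝ)) :=
    measurable_snd measurableSet_Iic
  have i1 : Integrable ((Prod.fst ⁻¹' Iic t).indicator (fun _ => (1:ℝ))) π :=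
    (integrable_indicator_iff m1).mpr ((integrableOn_const_iff (C := (1:ℝ))).mpr (Or.inr (measure_lt_top π _)))
  have i2 : Integrable ((Prod.snd ⁻¹' Iic t).indicator (fun _ => (1:ℝ))) π :=
    (integrable_indicator_iff m2).mpr ((integrableOn_const_iff (C := (1:ℝ))).mpr (Or.inr (measure_lt_top π _)))
  simp only [e1, e2]
  rw [integral_sub i1 i2, integral_indicator_const _ m1, integral_indicator_const _ m2]
  rw [← h1, ← h2, F, F, Measure.map_apply measurable_fst measurableSet_Iic,
    Measure.map_apply measurable_snd measurableSet_Iic]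
  simp
  rfl

lemma isProb_of_marginal (π : Measure (ℝ × ℝ)) {A : Measure ℝ} [IsProbabilityMeasure A]
    (h1 : π.map Prod.fst = A) : IsProbabilityMeasure π := by
  constructor
  have : π univ = A univ := by
    rw [← h1, Measure.map_apply measurable_fst MeasurableSet.univ, preimage_univ]
  rw [this, measure_univ]

/-- Lemma D: L1 distance of CDFs is at most any coupling cost (lintegral form) -/
lemma lint_cdf_le (π : Measure (ℝ × ℝ)) {A B : Measure ℝ}
    [IsProbabilityMeasure A] [IsProbabilityMeasure B]
    (h1 : π.map Prod.fst = A) (h2 : π.map Prod.snd = B) :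
    ∫⁻ t, ENNReal.ofReal |F A t - F B t| ≤ ∫⁻ q, ENNReal.ofReal |q.1 - q.2| ∂π := by
  haveI : IsProbabilityMeasure π := isProb_of_marginal π h1
  have hjm : Measurable (fun p : ℝ × (ℝ × ℝ) =>
      ENNReal.ofReal |(if p.2.1 ≤ p.1 then (1:ℝ) else 0) - (if p.2.2 ≤ p.1 then (1:ℝ) else 0)|) := by
    apply Measurable.ennreal_ofReal
    apply Measurable.abs
    apply Measurable.sub
    · exact Measurable.ite (measurableSet_le (measurable_fst.comp measurable_snd) measurable_fst)
        measurable_const measurable_const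
    · exact Measurable.ite (measurableSet_le (measurable_snd.comp measurable_snd) measurable_fst)
        measurable_const measurable_const
  have step1 : ∀ t : ℝ, ENNReal.ofReal |F A t - F B t|
      ≤ ∫⁻ q, ENNReal.ofReal
          |(if q.1 ≤ t then (1:ℝ) else 0) - (if q.2 ≤ t then (1:ℝ) else 0)| ∂π := by
    intro t
    rw [← integral_ind_diff π h1 h2 t]
    have hgi : Integrable (fun q : ℝ × ℝ =>
        (if q.1 ≤ t then (1:ℝ) else 0) - (if q.2 ≤ t then (1:ℝ) else 0)) π := by
      apply Integrable.mono' (integrable_const (2:ℝ))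
      · apply Measurable.aestronglyMeasurable
        apply Measurable.sub
        · exact Measurable.ite (measurableSet_le measurable_fst measurable_const)
            measurable_const measurable_const
        · exact Measurable.ite (measurableSet_le measurable_snd measurable_const)
            measurable_const measurable_const
      · refine ae_of_all _ fun q => ?_
        rw [Real.norm_eq_abs]
        split_ifs <;> norm_num
    calc ENNReal.ofReal |∫ q : ℝ × ℝ, ((if q.1 ≤ t then (1:ℝ) else 0) - (if q.2 ≤ t then (1:ℝ) else 0)) ∂π|
        ≤ ENNReal.ofReal (∫ q : ℝ × ℝ, |(if q.1 ≤ t then (1:ℝ) else 0) - (if q.2 ≤ t then (1:ℝ) else 0)| ∂π) := by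
          apply ENNReal.ofReal_le_ofReal
          calc |∫ q : ℝ × ℝ, ((if q.1 ≤ t then (1:ℝ) else 0) - (if q.2 ≤ t then (1:ℝ) else 0)) ∂π|
              = ‖∫ q : ℝ × ℝ, ((if q.1 ≤ t then (1:ℝ) else 0) - (if q.2 ≤ t then (1:ℝ) else 0)) ∂π‖ := (Real.norm_eq_abs _).symm
            _ ≤ ∫ q : ℝ × ℝ, ‖(if q.1 ≤ t then (1:ℝ) else 0) - (if q.2 ≤ t then (1:ℝ) else 0)‖ ∂π := norm_integral_le_integral_norm _
            _ = ∫ q : ℝ × ℝ, |(if q.1 ≤ t then (1:ℝ) else 0) - (if q.2 ≤ t then (1:ℝ) else 0)| ∂π := by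
                simp only [Real.norm_eq_abs]
      _ = ∫⁻ q, ENNReal.ofReal |(if q.1 ≤ t then (1:ℝ) else 0) - (if q.2 ≤ t then (1:ℝ) else 0)| ∂π := by
          rw [← ofReal_integral_eq_lintegral_ofReal hgi.abs (ae_of_all _ fun q => abs_nonneg _)]
  calc ∫⁻ t, ENNReal.ofReal |F A t - F B t|
      ≤ ∫⁻ t, ∫⁻ q, ENNReal.ofReal
          |(if q.1 ≤ t then (1:ℝ) else 0) - (if q.2 ≤ t then (1:ℝ) else 0)| ∂π :=
        lintegral_mono step1
    _ = ∫⁻ q, (∫⁻ t, ENNReal.ofReal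
          |(if q.1 ≤ t then (1:ℝ) else 0) - (if q.2 ≤ t then (1:ℝ) else 0)|) ∂π := by
        rw [lintegral_lintegral_swap hjm.aemeasurable]
    _ = ∫⁻ q, ENNReal.ofReal |q.1 - q.2| ∂π :=
        lintegral_congr fun q => lintegral_ind_diff q.1 q.2

lemma integrable_cost (π : Measure (ℝ × ℝ)) {A B : Measure ℝ}
    (h1 : π.map Prod.fst = A) (h2 : π.map Prod.snd = B)
    (hA : Integrable id A) (hB : Integrable id B) :
    Integrable (fun q : ℝ × ℝ => |q.1 - q.2|) π := by
  have hfst : Integrable (fun q : ℝ × ℝ => q.1) π := by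
    have : Integrable id (π.map Prod.fst) := by rw [h1]; exact hA
    exact (integrable_map_measure aestronglyMeasurable_id
      measurable_fst.aemeasurable).mp this
  have hsnd : Integrable (fun q : ℝ × ℝ => q.2) π := by
    have : Integrable id (π.map Prod.snd) := by rw [h2]; exact hB
    exact (integrable_map_measure aestronglyMeasurable_id
      measurable_snd.aemeasurable).mp this
  apply Integrable.mono' (hfst.abs.add hsnd.abs)
  · exact ((measurable_fst.sub measurable_snd).abs).aestronglyMeasurable
  · refine ae_of_all _ fun q => ?_
    rw [Real.norm_eq_abs, abs_abs]
    exact (abs_sub q.1 q.2)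

lemma lint_cost_lt_top (π : Measure (ℝ × ℝ)) {A B : Measure ℝ}
    (h1 : π.map Prod.fst = A) (h2 : π.map Prod.snd = B)
    (hA : Integrable id A) (hB : Integrable id B) :
    ∫⁻ q, ENNReal.ofReal |q.1 - q.2| ∂π < ⊤ := by
  have hint := integrable_cost π h1 h2 hA hB
  have heq : ∀ q : ℝ × ℝ, ENNReal.ofReal |q.1 - q.2| = (‖|q.1 - q.2|‖₊ : ℝ≥0∞) := by
    intro q
    rw [← enorm_eq_nnnorm, ← ofReal_norm_eq_enorm, Real.norm_eq_abs, abs_abs]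
  calc ∫⁻ q, ENNReal.ofReal |q.1 - q.2| ∂π
      = ∫⁻ q, (‖|q.1 - q.2|‖₊ : ℝ≥0∞) ∂π := lintegral_congr heq
    _ < ⊤ := hint.2

lemma prod_fst_marginal (A B : Measure ℝ) [IsProbabilityMeasure A] [IsProbabilityMeasure B] :
    (A.prod B).map Prod.fst = A := by
  rw [Measure.map_fst_prod, measure_univ, one_smul]

lemma prod_snd_marginal (A B : Measure ℝ) [IsProbabilityMeasure A] [IsProbabilityMeasure B] :
    (A.prod B).map Prod.snd = B := by
  rw [Measure.map_snd_prod, measure_univ, one_smul]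

lemma integrable_cdf_sub {A B : Measure ℝ} [IsProbabilityMeasure A] [IsProbabilityMeasure B]
    (hA : Integrable id A) (hB : Integrable id B) :
    Integrable (fun t => F A t - F B t) volume := by
  refine ⟨((measurable_F A).sub (measurable_F B)).aestronglyMeasurable, ?_⟩
  rw [HasFiniteIntegral]
  have heq : ∀ t : ℝ, (‖F A t - F B t‖₊ : ℝ≥0∞) = ENNReal.ofReal |F A t - F B t| := by
    intro t
    rw [← enorm_eq_nnnorm, ← ofReal_norm_eq_enorm, Real.norm_eq_abs]
  calc ∫⁻ t, (‖F A t - F B t‖₊ : ℝ≥0∞) = ∫⁻ t, ENNReal.ofReal |F A t - F B t| :=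
        lintegral_congr heq
    _ ≤ ∫⁻ q, ENNReal.ofReal |q.1 - q.2| ∂(A.prod B) :=
        lint_cdf_le _ (prod_fst_marginal A B) (prod_snd_marginal A B)
    _ < ⊤ := lint_cost_lt_top _ (prod_fst_marginal A B) (prod_snd_marginal A B) hA hB

lemma abs_cdf_le_W1 {A B : Measure ℝ} [IsProbabilityMeasure A] [IsProbabilityMeasure B]
    (hA : Integrable id A) (hB : Integrable id B) :
    ∫ t, |F A t - F B t| ≤ W1 A B := by
  have hne : Nonempty {π : Measure (ℝ × ℝ) // π.map Prod.fst = A ∧ π.map Prod.snd = B} :=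
    ⟨⟨A.prod B, prod_fst_marginal A B, prod_snd_marginal A B⟩⟩
  apply le_ciInf
  rintro ⟨π, h1, h2⟩
  haveI : IsProbabilityMeasure π := isProb_of_marginal π h1
  have hmeas : Measurable fun t => |F A t - F B t| :=
    ((measurable_F A).sub (measurable_F B)).abs
  have e1 : ∫ t, |F A t - F B t|
      = (∫⁻ t, ENNReal.ofReal |F A t - F B t|).toReal := by
    rw [integral_eq_lintegral_of_nonneg_ae (ae_of_all _ fun t => abs_nonneg _)
      hmeas.aestronglyMeasurable]
  have e2 : ∫ q, |q.1 - q.2| ∂(π : Measure (ℝ × ℝ))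
      = (∫⁻ q, ENNReal.ofReal |q.1 - q.2| ∂π).toReal := by
    rw [integral_eq_lintegral_of_nonneg_ae (f := fun q : ℝ × ℝ => |q.1 - q.2|)
      (ae_of_all _ fun q => abs_nonneg _)
      (((measurable_fst.sub measurable_snd).abs).aestronglyMeasurable :
        AEStronglyMeasurable (fun q : ℝ × ℝ => |q.1 - q.2|) π)]
  rw [e1, e2]
  exact ENNReal.toReal_mono (lint_cost_lt_top π h1 h2 hA hB).ne (lint_cdf_le π h1 h2)

/-- Lemma E : ∫ (F A - F B) = E_B - E_A -/
lemma integral_cdf_sub {A B : Measure ℝ} [IsProbabilityMeasure A] [IsProbabilityMeasure B]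
    (hA : Integrable id A) (hB : Integrable id B) :
    ∫ t, (F A t - F B t) = (∫ x, x ∂B) - (∫ x, x ∂A) := by
  set π := A.prod B with hπ
  have h1 := prod_fst_marginal A B
  have h2 := prod_snd_marginal A B
  have hgm : Measurable (fun p : ℝ × (ℝ × ℝ) =>
      (if p.2.1 ≤ p.1 then (1:ℝ) else 0) - (if p.2.2 ≤ p.1 then (1:ℝ) else 0)) := by
    apply Measurable.sub
    · exact Measurable.ite (measurableSet_le (measurable_fst.comp measurable_snd) measurable_fst)
        measurable_const measurable_const
    · exact Measurable.ite (measurableSet_le (measurable_snd.comp measurable_snd) measurable_fst)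
        measurable_const measurable_const
  have hint : Integrable (Function.uncurry (fun (t : ℝ) (q : ℝ × ℝ) =>
      (if q.1 ≤ t then (1:ℝ) else 0) - (if q.2 ≤ t then (1:ℝ) else 0))) (volume.prod π) := by
    refine ⟨hgm.aestronglyMeasurable, ?_⟩
    rw [HasFiniteIntegral]
    have heq2 : (fun a : ℝ × (ℝ × ℝ) => (‖Function.uncurry (fun (t : ℝ) (q : ℝ × ℝ) =>
        (if q.1 ≤ t then (1:ℝ) else 0) - (if q.2 ≤ t then (1:ℝ) else 0)) a‖ₑ))
        = fun a => ENNReal.ofReal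
            |(if a.2.1 ≤ a.1 then (1:ℝ) else 0) - (if a.2.2 ≤ a.1 then (1:ℝ) else 0)| := by
      funext a
      rw [← ofReal_norm_eq_enorm, Real.norm_eq_abs]
      rfl
    rw [heq2, lintegral_prod _ (Measurable.ennreal_ofReal hgm.abs).aemeasurable]
    calc ∫⁻ t, ∫⁻ q, ENNReal.ofReal
            |(if q.1 ≤ t then (1:ℝ) else 0) - (if q.2 ≤ t then (1:ℝ) else 0)| ∂π
        = ∫⁻ q, (∫⁻ t, ENNReal.ofReal
            |(if q.1 ≤ t then (1:ℝ) else 0) - (if q.2 ≤ t then (1:ℝ) else 0)|) ∂π := by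
          rw [lintegral_lintegral_swap]
          exact (Measurable.ennreal_ofReal hgm.abs).aemeasurable
      _ = ∫⁻ q, ENNReal.ofReal |q.1 - q.2| ∂π :=
          lintegral_congr fun q => lintegral_ind_diff q.1 q.2
      _ < ⊤ := lint_cost_lt_top π h1 h2 hA hB
  haveI : IsProbabilityMeasure π := isProb_of_marginal π h1
  have hswap := integral_integral_swap hint
  have hLHS : (∫ t, ∫ q, ((if q.1 ≤ t then (1:ℝ) else 0) - (if q.2 ≤ t then (1:ℝ) else 0)) ∂π)
      = ∫ t, (F A t - F B t) :=
    integral_congr_ae (ae_of_all _ fun t => integral_ind_diff π h1 h2 t)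
  have hinner : ∀ q : ℝ × ℝ,
      (∫ t, ((if q.1 ≤ t then (1:ℝ) else 0) - (if q.2 ≤ t then (1:ℝ) else 0))) = q.2 - q.1 := by
    rintro ⟨x, y⟩
    simp only
    rcases le_total x y with hxy | hxy
    · have : (fun t => (if x ≤ t then (1:ℝ) else 0) - (if y ≤ t then (1:ℝ) else 0))
          = (Ico x y).indicator (fun _ => (1:ℝ)) := by
        funext t
        rw [indicator_apply]
        by_cases hx : x ≤ t <;> by_cases hy : y ≤ t
        · simp [hx, hy, mem_Ico, not_lt.mpr hy]
        · simp [hx, hy, mem_Ico, not_le.mp hy]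
        · exact absurd (hxy.trans hy) hx
        · simp [hx, hy, mem_Ico]
      rw [this, integral_indicator_const _ measurableSet_Ico]
      simp [Real.volume_Ico, ENNReal.toReal_ofReal (by linarith : (0:ℝ) ≤ y - x), hxy]
    · have : (fun t => (if x ≤ t then (1:ℝ) else 0) - (if y ≤ t then (1:ℝ) else 0))
          = fun t => -((Ico y x).indicator (fun _ => (1:ℝ)) t) := by
        funext t
        rw [indicator_apply]
        by_cases hx : x ≤ t <;> by_cases hy : y ≤ t
        · simp [hx, hy, mem_Ico, not_lt.mpr hx]
        · exact absurd (hxy.trans hx) hy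
        · simp [hx, hy, mem_Ico, not_le.mp hx]
        · simp [hx, hy, mem_Ico]
      rw [this, integral_neg, integral_indicator_const _ measurableSet_Ico]
      simp only [smul_eq_mul, mul_one, Real.volume_Ico, Real.volume_real_Ico_of_le hxy,
        ENNReal.toReal_ofReal (by linarith : (0:ℝ) ≤ x - y)]
      ring
  have hfst : Integrable (fun q : ℝ × ℝ => q.1) π := by
    have : Integrable id (π.map Prod.fst) := by rw [h1]; exact hA
    exact (integrable_map_measure aestronglyMeasurable_id
      measurable_fst.aemeasurable).mp this
  have hsnd : Integrable (fun q : ℝ × ℝ => q.2) π := by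
    have : Integrable id (π.map Prod.snd) := by rw [h2]; exact hB
    exact (integrable_map_measure aestronglyMeasurable_id
      measurable_snd.aemeasurable).mp this
  have hRHS : (∫ q : ℝ × ℝ, (q.2 - q.1) ∂π) = (∫ x, x ∂B) - (∫ x, x ∂A) := by
    rw [integral_sub hsnd hfst]
    have eB : ∫ x, x ∂B = ∫ a : ℝ × ℝ, a.2 ∂π := by
      rw [← h2]
      exact integral_map measurable_snd.aemeasurable
        (measurable_id.aestronglyMeasurable : AEStronglyMeasurable (fun x : ℝ => x) _)
    have eA : ∫ x, x ∂A = ∫ a : ℝ × ℝ, a.1 ∂π := by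
      rw [← h1]
      exact integral_map measurable_fst.aemeasurable
        (measurable_id.aestronglyMeasurable : AEStronglyMeasurable (fun x : ℝ => x) _)
    rw [eA, eB]
  rw [← hLHS, hswap, ← hRHS]
  exact integral_congr_ae (ae_of_all _ fun q => hinner q)

end Stmt8Aux

open Stmt8Aux

theorem stmt8 (P Q Qup Qdown : Measure ℝ)
    [IsProbabilityMeasure P] [IsProbabilityMeasure Q]
    [IsProbabilityMeasure Qup] [IsProbabilityMeasure Qdown]
    (n : ℕ) (hn : 0 < n)
    (p : ℝ → ℝ) (hp : ∀ t, 0 ≤ p t)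
    (hPd : P = volume.withDensity fun t => ENNReal.ofReal (p t))
    (hpbdd : BddAbove (Set.range p))
    (hP : Integrable id P) (hQ : Integrable id Q)
    (hQup : Integrable id Qup) (hQdown : Integrable id Qdown)
    (hup : ∀ t : ℝ, F Qup t ≤ F Q t) (hdown : ∀ t : ℝ, F Q t ≤ F Qdown t) :
    totalCovGap P Q n ≤ (1/2) * (⨆ t, p t) *
      (W1 P Qup + W1 P Qdown + ((∫ x, x ∂Qup) - ∫ x, x ∂Qdown)) := by
  classical
  set Pn := (Measure.pi fun _ : Fin n => P) with hPn
  haveI hPnp : IsProbabilityMeasure Pn := by rw [hPn]; infer_instance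
  haveI hIoofin : IsFiniteMeasure (volume.restrict (Ioo (0:ℝ) 1)) := by
    constructor
    rw [Measure.restrict_apply_univ]
    simp [Real.volume_Ioo]
  set h : ℝ → ℝ := fun t => max (F P t - F Qup t) 0 + max (F Qdown t - F P t) 0 with hh
  have hmax : ∀ x : ℝ, max x 0 = (x + |x|)/2 := by
    intro x
    rcases le_total 0 x with hx | hx
    · rw [max_eq_left hx, abs_of_nonneg hx]; ring
    · rw [max_eq_right hx, abs_of_nonpos hx]; ring
  have hmeas : Measurable h :=
    (((measurable_F P).sub (measurable_F Qup)).max measurable_const).add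
      (((measurable_F Qdown).sub (measurable_F P)).max measurable_const)
  have h_nonneg : ∀ t, 0 ≤ h t := fun t => add_nonneg (le_max_right _ _) (le_max_right _ _)
  have h_le : ∀ t, h t ≤ 2 := by
    intro t
    have b1 := F_le_one P t; have b2 := F_nonneg Qup t
    have b3 := F_le_one Qdown t; have b4 := F_nonneg P t
    have h1 : F P t - F Qup t ≤ 1 := by linarith
    have h2 : F Qdown t - F P t ≤ 1 := by linarith
    calc h t ≤ 1 + 1 := add_le_add (max_le h1 zero_le_one) (max_le h2 zero_le_one)
      _ = 2 := by norm_num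
  have habs : ∀ t, |F P t - F Q t| ≤ h t := by
    intro t
    apply abs_le.mpr
    constructor
    · have l1 : F Q t - F P t ≤ F Qdown t - F P t := by have := hdown t; linarith
      have l2 : F Qdown t - F P t ≤ max (F Qdown t - F P t) 0 := le_max_left _ _
      have l3 : (0:ℝ) ≤ max (F P t - F Qup t) 0 := le_max_right _ _
      simp only [hh]
      linarith
    · have l1 : F P t - F Q t ≤ F P t - F Qup t := by have := hup t; linarith
      have l2 : F P t - F Qup t ≤ max (F P t - F Qup t) 0 := le_max_left _ _
      have l3 : (0:ℝ) ≤ max (F Qdown t - F P t) 0 := le_max_right _ _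
      simp only [hh]
      linarith
  have habsFQ : ∀ x : ℝ, |F P x - F Q x| ≤ 2 := by
    intro x
    have b1 := F_le_one P x; have b2 := F_nonneg P x
    have b3 := F_le_one Q x; have b4 := F_nonneg Q x
    apply abs_le.mpr; constructor <;> linarith
  -- rewrite totalCovGap as an integral over Ioo 0 1
  have hTCG : totalCovGap P Q n
      = ∫ α in Ioo (0:ℝ) 1, |∫ s, (F P (empQuantile s α) - F Q (empQuantile s α)) ∂Pn| := by
    rw [totalCovGap, intervalIntegral.integral_of_le (by norm_num : (0:ℝ) ≤ 1),
      integral_Ioc_eq_integral_Ioo, hPn]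
  set G : ℝ → ℝ := fun α => ∫ s, h (T2 (α, s)) ∂Pn with hG
  have hg2meas : Measurable fun q : ℝ × (Fin n → ℝ) => h (T2 q) :=
    hmeas.comp (measurable_T2 hn)
  have hGsm : StronglyMeasurable G := by
    rw [hG]
    exact (hg2meas.stronglyMeasurable).integral_prod_right'
  have hGbd : ∀ α, ‖G α‖ ≤ 2 := by
    intro α
    rw [hG]
    have := norm_integral_le_of_norm_le_const (μ := Pn)
      (f := fun s => h (T2 (α, s))) (C := 2)
      (ae_of_all _ fun s => by
        rw [Real.norm_eq_abs, abs_of_nonneg (h_nonneg _)]; exact h_le _)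
    simpa [measure_univ] using this
  have hGint : Integrable G (volume.restrict (Ioo (0:ℝ) 1)) :=
    Integrable.mono' (integrable_const 2) hGsm.aestronglyMeasurable (ae_of_all _ hGbd)
  have hpoint : ∀ α ∈ Ioo (0:ℝ) 1,
      |∫ s, (F P (empQuantile s α) - F Q (empQuantile s α)) ∂Pn| ≤ G α := by
    intro α hα
    have hTeq : ∀ s : Fin n → ℝ, empQuantile s α = T2 (α, s) :=
      fun s => (if_pos hα).symm
    simp only [hTeq]
    have hfm : Measurable fun s : Fin n → ℝ => F P (T2 (α, s)) - F Q (T2 (α, s)) :=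
      ((measurable_F P).comp (measurable_T2_right hn α)).sub
        ((measurable_F Q).comp (measurable_T2_right hn α))
    have hfint : Integrable (fun s => F P (T2 (α, s)) - F Q (T2 (α, s))) Pn := by
      apply Integrable.mono' (integrable_const (2:ℝ)) hfm.aestronglyMeasurable
      exact ae_of_all _ fun s => by rw [Real.norm_eq_abs]; exact habsFQ _
    have hhint : Integrable (fun s => h (T2 (α, s))) Pn := by
      apply Integrable.mono' (integrable_const (2:ℝ))
        (hmeas.comp (measurable_T2_right hn α)).aestronglyMeasurable
      refine ae_of_all _ fun s => ?_
      simp only [Function.comp_apply, Real.norm_eq_abs]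
      rw [abs_of_nonneg (h_nonneg _)]; exact h_le _
    calc |∫ s, (F P (T2 (α, s)) - F Q (T2 (α, s))) ∂Pn|
        ≤ ∫ s, |F P (T2 (α, s)) - F Q (T2 (α, s))| ∂Pn := by
          rw [← Real.norm_eq_abs]
          refine (norm_integral_le_integral_norm _).trans_eq ?_
          simp [Real.norm_eq_abs]
      _ ≤ ∫ s, h (T2 (α, s)) ∂Pn :=
          integral_mono hfint.abs hhint fun s => habs _
  have hstep1 : totalCovGap P Q n ≤ ∫ α in Ioo (0:ℝ) 1, G α := by
    rw [hTCG]
    apply integral_mono_of_nonneg (ae_of_all _ fun α => abs_nonneg _) hGint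
    filter_upwards [ae_restrict_mem measurableSet_Ioo] with α hα using hpoint α hα
  -- Fubini
  have hq2int : Integrable (fun q : ℝ × (Fin n → ℝ) => h (T2 q))
      ((volume.restrict (Ioo (0:ℝ) 1)).prod Pn) := by
    apply Integrable.mono' (integrable_const (2:ℝ)) hg2meas.aestronglyMeasurable
    exact ae_of_all _ fun q => by
      rw [Real.norm_eq_abs, abs_of_nonneg (h_nonneg _)]; exact h_le _
  have hswap : ∫ α in Ioo (0:ℝ) 1, G α
      = ∫ s, (∫ α in Ioo (0:ℝ) 1, h (T2 (α, s))) ∂Pn := by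
    rw [hG]
    exact integral_integral_swap hq2int
  have hhint_i : ∀ i : Fin n, Integrable (fun s : Fin n → ℝ => h (s i)) Pn := by
    intro i
    apply Integrable.mono' (integrable_const (2:ℝ))
      (hmeas.comp (measurable_pi_apply i)).aestronglyMeasurable
    refine ae_of_all _ fun s => ?_
    simp only [Function.comp_apply, Real.norm_eq_abs]
    rw [abs_of_nonneg (h_nonneg _)]; exact h_le _
  have hsum : ∫ s, ((n:ℝ)⁻¹ * ∑ i, h (s i)) ∂Pn = ∫ t, h t ∂P := by
    rw [integral_const_mul, integral_finset_sum _ (fun i _ => hhint_i i)]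
    have : ∀ i : Fin n, ∫ s, h (s i) ∂Pn = ∫ t, h t ∂P := by
      intro i
      rw [hPn]
      exact integral_eval_pi P i hmeas
    simp only [this, Finset.sum_const, Finset.card_univ, Fintype.card_fin, nsmul_eq_mul]
    rw [← mul_assoc, inv_mul_cancel₀ (by exact_mod_cast hn.ne' : (n:ℝ) ≠ 0), one_mul]
  have hstep2 : totalCovGap P Q n ≤ ∫ t, h t ∂P := by
    refine hstep1.trans ?_
    rw [hswap]
    rw [show (fun s : Fin n → ℝ => ∫ α in Ioo (0:ℝ) 1, h (T2 (α, s)))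
        = fun s : Fin n → ℝ => ((n:ℝ)⁻¹ * ∑ i, h (s i)) from
      funext fun s => integral_T2 hn s hmeas] at *
    rw [hsum]
  -- density bound
  set c := ⨆ t, p t with hc
  have hple : ∀ t, p t ≤ c := fun t => le_ciSup hpbdd t
  have hcnn : (0:ℝ) ≤ c := (hp 0).trans (hple 0)
  have hPle : P ≤ (ENNReal.ofReal c) • volume := by
    refine Measure.le_iff.mpr fun s hs => ?_
    rw [hPd, withDensity_apply _ hs, Measure.smul_apply, smul_eq_mul]
    calc ∫⁻ t in s, ENNReal.ofReal (p t) ∂volume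
        ≤ ∫⁻ _ in s, ENNReal.ofReal c ∂volume :=
          lintegral_mono fun t => ENNReal.ofReal_le_ofReal (hple t)
      _ = ENNReal.ofReal c * volume s := by rw [setLIntegral_const]
  have i1 : Integrable (fun t => F P t - F Qup t) volume := integrable_cdf_sub hP hQup
  have i2 : Integrable (fun t => F Qdown t - F P t) volume := integrable_cdf_sub hQdown hP
  have he : h = fun t => ((F P t - F Qup t) + |F P t - F Qup t|)/2
      + ((F Qdown t - F P t) + |F Qdown t - F P t|)/2 := by
    funext t
    rw [hh]
    simp only
    rw [hmax, hmax]
  have hvolint : Integrable h volume := by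
    rw [he]
    exact ((i1.add i1.abs).div_const 2).add ((i2.add i2.abs).div_const 2)
  have hPbound : ∫ t, h t ∂P ≤ c * ∫ t, h t ∂volume := by
    have hle := integral_mono_measure hPle (ae_of_all _ h_nonneg)
      (hvolint.smul_measure ENNReal.ofReal_ne_top)
    rwa [integral_smul_measure, ENNReal.toReal_ofReal hcnn, smul_eq_mul] at hle
  have hWu : ∫ t, |F P t - F Qup t| ≤ W1 P Qup := abs_cdf_le_W1 hP hQup
  have hWd : ∫ t, |F Qdown t - F P t| ≤ W1 P Qdown := by
    have e : (fun t => |F Qdown t - F P t|) = fun t => |F P t - F Qdown t| :=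
      funext fun t => abs_sub_comm _ _
    rw [e]
    exact abs_cdf_le_W1 hP hQdown
  have hEu : ∫ t, (F P t - F Qup t) = (∫ x, x ∂Qup) - ∫ x, x ∂P := integral_cdf_sub hP hQup
  have hEd : ∫ t, (F Qdown t - F P t) = (∫ x, x ∂P) - ∫ x, x ∂Qdown := integral_cdf_sub hQdown hP
  have hvol_id : ∫ t, h t ∂volume
      = (1/2)*((∫ t, |F P t - F Qup t|) + (∫ t, |F Qdown t - F P t|)
          + ((∫ x, x ∂Qup) - ∫ x, x ∂Qdown)) := by
    have eI : ∫ t, h t ∂volume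
        = (∫ t, ((F P t - F Qup t) + |F P t - F Qup t|)/2)
          + ∫ t, ((F Qdown t - F P t) + |F Qdown t - F P t|)/2 := by
      rw [he]
      exact integral_add ((i1.add i1.abs).div_const 2) ((i2.add i2.abs).div_const 2)
    have eI1 : ∫ t, ((F P t - F Qup t) + |F P t - F Qup t|)/2
        = ((∫ t, (F P t - F Qup t)) + ∫ t, |F P t - F Qup t|)/2 := by
      rw [integral_div, integral_add i1 i1.abs]
    have eI2 : ∫ t, ((F Qdown t - F P t) + |F Qdown t - F P t|)/2
        = ((∫ t, (F Qdown t - F P t)) + ∫ t, |F Qdown t - F P t|)/2 := by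
      rw [integral_div, integral_add i2 i2.abs]
    rw [eI, eI1, eI2, hEu, hEd]
    ring
  calc totalCovGap P Q n ≤ ∫ t, h t ∂P := hstep2
    _ ≤ c * ∫ t, h t ∂volume := hPbound
    _ = (1/2) * c * ((∫ t, |F P t - F Qup t|) + (∫ t, |F Qdown t - F P t|)
          + ((∫ x, x ∂Qup) - ∫ x, x ∂Qdown)) := by rw [hvol_id]; ring
    _ ≤ (1/2) * c * (W1 P Qup + W1 P Qdown + ((∫ x, x ∂Qup) - ∫ x, x ∂Qdown)) := by
        apply mul_le_mul_of_nonneg_left _ (by positivity)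
        linarith
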